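/- Let x = (x1,...,x6) ∈ ℝ⁶ with all coordinates positive and x1 > 1, and let φ(x) = (x3·x4 + x2·x5 + x1·x2·x3 + x1·x4·x5 + x6 − x1²·x6) / (√(x1² + x3² + x5² + 2·x1·x3·x5 − 1) · √(x2² + x4² + 2·x1·x2·x4)). Then at least one of the following holds at x: (i) ∂φ/∂x2 > 0 and ∂φ/∂x3 > 0; (ii) ∂φ/∂x4 > 0 and ∂φ/∂x5 > 0. -/

import Mathlib

/-- The cosine of the dihedral angle at the hyper-ideal edge e23 of a decorated
3-1 type hyperbolic tetrahedron. -/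
noncomputable def phi (x1 x2 x3 x4 x5 x6 : ℝ) : ℝ :=
  (x3 * x4 + x2 * x5 + x1 * x2 * x3 + x1 * x4 * x5 + x6 - x1 ^ 2 * x6) /
    (Real.sqrt (x1 ^ 2 + x3 ^ 2 + x5 ^ 2 + 2 * x1 * x3 * x5 - 1) *
      Real.sqrt (x2 ^ 2 + x4 ^ 2 + 2 * x1 * x2 * x4))

private lemma key (a b c e f x : ℝ) (hc : 0 < c) (hq : 0 < x^2 + 2*e*x + f) :
    HasDerivAt (fun t => (a*t+b)/(c * Real.sqrt (t^2+2*e*t+f)))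
      ((a*(x^2+2*e*x+f) - (a*x+b)*(x+e)) /
        (c*((x^2+2*e*x+f)*Real.sqrt (x^2+2*e*x+f)))) x := by
  have hs : 0 < Real.sqrt (x^2+2*e*x+f) := Real.sqrt_pos.mpr hq
  have hq' : HasDerivAt (fun t => t^2+2*e*t+f) (2*x+2*e) x := by
    have h1 := hasDerivAt_pow 2 x
    have h2 := (hasDerivAt_id x).const_mul (2*e)
    simpa using (h1.add h2).add_const f
  have hsqrt := hq'.sqrt (ne_of_gt hq)
  have hden := hsqrt.const_mul c
  have hnum : HasDerivAt (fun t : ℝ => a*t+b) a x := by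
    simpa using ((hasDerivAt_id x).const_mul a).add_const b
  have hne : c * Real.sqrt (x^2+2*e*x+f) ≠ 0 := by positivity
  have h := hnum.div hden hne
  refine h.congr_deriv ?_
  set s := Real.sqrt (x^2+2*e*x+f) with hsdef
  have hs2 : s^2 = x^2+2*e*x+f := Real.sq_sqrt hq.le
  rw [← hs2]
  field_simp

set_option maxHeartbeats 1000000 in
/-- at every positive point with x1 > 1, either
(∂φ/∂x2 > 0 and ∂φ/∂x3 > 0) or (∂φ/∂x4 > 0 and ∂φ/∂x5 > 0). -/
theorem stmt_9 (x1 x2 x3 x4 x5 x6 : ℝ)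
    (h1 : 0 < x1) (h2 : 0 < x2) (h3 : 0 < x3) (h4 : 0 < x4) (h5 : 0 < x5) (h6 : 0 < x6)
    (h1' : 1 < x1) :
    (0 < deriv (fun t => phi x1 t x3 x4 x5 x6) x2 ∧
     0 < deriv (fun t => phi x1 x2 t x4 x5 x6) x3) ∨
    (0 < deriv (fun t => phi x1 x2 x3 t x5 x6) x4 ∧
     0 < deriv (fun t => phi x1 x2 x3 x4 t x6) x5) := by
  have hx1 : 0 < x1^2 - 1 := by nlinarith
  have hArad : 0 < x1 ^ 2 + x3 ^ 2 + x5 ^ 2 + 2 * x1 * x3 * x5 - 1 := by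
    nlinarith [sq_nonneg x3, sq_nonneg x5, mul_pos (mul_pos h1 h3) h5]
  have hBrad : 0 < x2 ^ 2 + x4 ^ 2 + 2 * x1 * x2 * x4 := by positivity
  set cA := Real.sqrt (x1 ^ 2 + x3 ^ 2 + x5 ^ 2 + 2 * x1 * x3 * x5 - 1) with hcAdef
  set cB := Real.sqrt (x2 ^ 2 + x4 ^ 2 + 2 * x1 * x2 * x4) with hcBdef
  have hcA : 0 < cA := Real.sqrt_pos.mpr hArad
  have hcB : 0 < cB := Real.sqrt_pos.mpr hBrad
  -- the four slice functions in canonical form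
  have hfun2 : (fun t => phi x1 t x3 x4 x5 x6) =
      fun t => ((x5+x1*x3)*t + (x3*x4 + x1*x4*x5 + x6 - x1^2*x6)) /
        (cA * Real.sqrt (t^2 + 2*(x1*x4)*t + x4^2)) := by
    funext t
    simp only [phi, hcAdef]
    rw [show x3 * x4 + t * x5 + x1 * t * x3 + x1 * x4 * x5 + x6 - x1 ^ 2 * x6
        = (x5+x1*x3)*t + (x3*x4 + x1*x4*x5 + x6 - x1^2*x6) from by ring,
      show t ^ 2 + x4 ^ 2 + 2 * x1 * t * x4 = t^2 + 2*(x1*x4)*t + x4^2 from by ring]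
  have hfun4 : (fun t => phi x1 x2 x3 t x5 x6) =
      fun t => ((x3+x1*x5)*t + (x2*x5 + x1*x2*x3 + x6 - x1^2*x6)) /
        (cA * Real.sqrt (t^2 + 2*(x1*x2)*t + x2^2)) := by
    funext t
    simp only [phi, hcAdef]
    rw [show x3 * t + x2 * x5 + x1 * x2 * x3 + x1 * t * x5 + x6 - x1 ^ 2 * x6
        = (x3+x1*x5)*t + (x2*x5 + x1*x2*x3 + x6 - x1^2*x6) from by ring,
      show x2 ^ 2 + t ^ 2 + 2 * x1 * x2 * t = t^2 + 2*(x1*x2)*t + x2^2 from by ring]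
  have hfun3 : (fun t => phi x1 x2 t x4 x5 x6) =
      fun t => ((x4+x1*x2)*t + (x2*x5 + x1*x4*x5 + x6 - x1^2*x6)) /
        (cB * Real.sqrt (t^2 + 2*(x1*x5)*t + (x1^2+x5^2-1))) := by
    funext t
    simp only [phi, hcBdef]
    rw [show t * x4 + x2 * x5 + x1 * x2 * t + x1 * x4 * x5 + x6 - x1 ^ 2 * x6
        = (x4+x1*x2)*t + (x2*x5 + x1*x4*x5 + x6 - x1^2*x6) from by ring,
      show x1 ^ 2 + t ^ 2 + x5 ^ 2 + 2 * x1 * t * x5 - 1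
        = t^2 + 2*(x1*x5)*t + (x1^2+x5^2-1) from by ring,
      mul_comm (Real.sqrt (t^2 + 2*(x1*x5)*t + (x1^2+x5^2-1)))]
  have hfun5 : (fun t => phi x1 x2 x3 x4 t x6) =
      fun t => ((x2+x1*x4)*t + (x3*x4 + x1*x2*x3 + x6 - x1^2*x6)) /
        (cB * Real.sqrt (t^2 + 2*(x1*x3)*t + (x1^2+x3^2-1))) := by
    funext t
    simp only [phi, hcBdef]
    rw [show x3 * x4 + x2 * t + x1 * x2 * x3 + x1 * x4 * t + x6 - x1 ^ 2 * x6
        = (x2+x1*x4)*t + (x3*x4 + x1*x2*x3 + x6 - x1^2*x6) from by ring,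
      show x1 ^ 2 + x3 ^ 2 + t ^ 2 + 2 * x1 * x3 * t - 1
        = t^2 + 2*(x1*x3)*t + (x1^2+x3^2-1) from by ring,
      mul_comm (Real.sqrt (t^2 + 2*(x1*x3)*t + (x1^2+x3^2-1)))]
  -- radicand positivity at the points
  have hq2 : 0 < x2^2 + 2*(x1*x4)*x2 + x4^2 := by positivity
  have hq4 : 0 < x4^2 + 2*(x1*x2)*x4 + x2^2 := by positivity
  have hq3 : 0 < x3^2 + 2*(x1*x5)*x3 + (x1^2+x5^2-1) := by nlinarith
  have hq5 : 0 < x5^2 + 2*(x1*x3)*x5 + (x1^2+x3^2-1) := by nlinarith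
  have hd2 := (key (x5+x1*x3) (x3*x4 + x1*x4*x5 + x6 - x1^2*x6) cA (x1*x4) (x4^2) x2
    hcA hq2).deriv
  have hd4 := (key (x3+x1*x5) (x2*x5 + x1*x2*x3 + x6 - x1^2*x6) cA (x1*x2) (x2^2) x4
    hcA hq4).deriv
  have hd3 := (key (x4+x1*x2) (x2*x5 + x1*x4*x5 + x6 - x1^2*x6) cB (x1*x5) (x1^2+x5^2-1) x3
    hcB hq3).deriv
  have hd5 := (key (x2+x1*x4) (x3*x4 + x1*x2*x3 + x6 - x1^2*x6) cB (x1*x3) (x1^2+x3^2-1) x5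
    hcB hq5).deriv
  rcases le_or_gt (x4*x5) (x2*x3) with hcase | hcase
  · left
    constructor
    · rw [hfun2, hd2]
      apply div_pos
      · have hfac : 0 < x4*(x2*x3-x4*x5) + x6*(x2+x1*x4) := by
          nlinarith [mul_nonneg h4.le (sub_nonneg.mpr hcase), mul_pos h6 h2,
            mul_pos (mul_pos h1 h4) h6]
        calc (0:ℝ) < (x1^2-1) * (x4*(x2*x3-x4*x5) + x6*(x2+x1*x4)) := mul_pos hx1 hfac
          _ = _ := by ring
      · exact mul_pos hcA (mul_pos hq2 (Real.sqrt_pos.mpr hq2))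
    · rw [hfun3, hd3]
      apply div_pos
      · have hfac : 0 < x4*(1-x5^2) + x2*(x1+x3*x5) + x6*(x3+x1*x5) := by
          nlinarith [mul_nonneg h5.le (sub_nonneg.mpr hcase), mul_pos h1 h2,
            mul_pos h3 h6, mul_pos (mul_pos h1 h5) h6]
        calc (0:ℝ) < (x1^2-1) * (x4*(1-x5^2) + x2*(x1+x3*x5) + x6*(x3+x1*x5)) :=
              mul_pos hx1 hfac
          _ = _ := by ring
      · exact mul_pos hcB (mul_pos hq3 (Real.sqrt_pos.mpr hq3))
  · right
    have hcase' : x2*x3 ≤ x4*x5 := hcase.le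
    constructor
    · rw [hfun4, hd4]
      apply div_pos
      · have hfac : 0 < x2*(x4*x5-x2*x3) + x6*(x4+x1*x2) := by
          nlinarith [mul_nonneg h2.le (sub_nonneg.mpr hcase'), mul_pos h6 h4,
            mul_pos (mul_pos h1 h2) h6]
        calc (0:ℝ) < (x1^2-1) * (x2*(x4*x5-x2*x3) + x6*(x4+x1*x2)) := mul_pos hx1 hfac
          _ = _ := by ring
      · exact mul_pos hcA (mul_pos hq4 (Real.sqrt_pos.mpr hq4))
    · rw [hfun5, hd5]
      apply div_pos
      · have hfac : 0 < x2*(1-x3^2) + x4*(x1+x3*x5) + x6*(x5+x1*x3) := by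
          nlinarith [mul_nonneg h3.le (sub_nonneg.mpr hcase'), mul_pos h1 h4,
            mul_pos h5 h6, mul_pos (mul_pos h1 h3) h6]
        calc (0:ℝ) < (x1^2-1) * (x2*(1-x3^2) + x4*(x1+x3*x5) + x6*(x5+x1*x3)) :=
              mul_pos hx1 hfac
          _ = _ := by ring
      · exact mul_pos hcB (mul_pos hq5 (Real.sqrt_pos.mpr hq5))
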